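/- Vega of the barrier-pricing parameter ℬ: fix K > 0, B > 0, T > 0, S > 0, r_d, r_f ∈ ℝ and φ ∈ {1, −1}. Then the function σ ↦ ℬ(σ) = φ(S e^{-r_f T} N(φx₂(σ)) − K e^{-r_d T} N(φ(x₂(σ) − σ√T))), where x₂(σ) = ln(S/B)/(σ√T) + (1+α(σ))σ√T and α(σ) = (r_d − r_f − σ²/2)/σ², is differentiable at every σ > 0 with derivative ∂ℬ/∂σ = (1/(2√(2π) σ² √T)) · [ K(2ln(S/B) + T(2r_d − 2r_f + σ²)) exp(−(T(−2r_d + 2r_f + σ²) − 2ln(S/B))²/(8σ²T) − r_d T) + S(T(−2r_d + 2r_f + σ²) − 2ln(S/B)) exp(−(2ln(S/B) + T(2r_d − 2r_f + σ²))²/(8σ²T) − r_f T) ]. -/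

import Mathlib

noncomputable def stdNormalCdf (z : ℝ) : ℝ :=
  ∫ x in Set.Iic z, (1 / Real.sqrt (2 * Real.pi)) * Real.exp (-x ^ 2 / 2)

lemma gauss_integrable : MeasureTheory.Integrable
    (fun x : ℝ => (1 / Real.sqrt (2 * Real.pi)) * Real.exp (-x ^ 2 / 2)) := by
  have h : MeasureTheory.Integrable (fun x : ℝ => Real.exp (-(1/2) * x ^ 2)) :=
    integrable_exp_neg_mul_sq (by norm_num)
  have := h.const_mul (1 / Real.sqrt (2 * Real.pi))
  convert this using 2 with x
  ring_nf

lemma cdf_hasDerivAt (z : ℝ) :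
    HasDerivAt stdNormalCdf ((1 / Real.sqrt (2 * Real.pi)) * Real.exp (-z ^ 2 / 2)) z := by
  have key : ∀ w : ℝ, stdNormalCdf 0 +
      (∫ x in (0:ℝ)..w, (1 / Real.sqrt (2 * Real.pi)) * Real.exp (-x ^ 2 / 2)) = stdNormalCdf w := by
    intro w
    rw [← intervalIntegral.integral_Iic_sub_Iic (gauss_integrable.integrableOn)
      (gauss_integrable.integrableOn)]
    unfold stdNormalCdf; ring
  have hcont : Continuous (fun x : ℝ => (1 / Real.sqrt (2 * Real.pi)) * Real.exp (-x ^ 2 / 2)) := by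
    continuity
  have h2 : HasDerivAt (fun w => ∫ x in (0:ℝ)..w, (1 / Real.sqrt (2 * Real.pi)) * Real.exp (-x ^ 2 / 2))
      ((1 / Real.sqrt (2 * Real.pi)) * Real.exp (-z ^ 2 / 2)) z :=
    intervalIntegral.integral_hasDerivAt_right (gauss_integrable.intervalIntegrable)
      (hcont.stronglyMeasurableAtFilter _ _) hcont.continuousAt
  have h3 := (hasDerivAt_const z (stdNormalCdf 0)).add h2
  have hfun : (fun w => stdNormalCdf 0 +
      ∫ x in (0:ℝ)..w, (1 / Real.sqrt (2 * Real.pi)) * Real.exp (-x ^ 2 / 2)) = stdNormalCdf :=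
    funext key
  rw [show ((fun _ => stdNormalCdf 0) + fun w => ∫ x in (0:ℝ)..w, (1 / Real.sqrt (2 * Real.pi)) * Real.exp (-x ^ 2 / 2)) = stdNormalCdf from hfun] at h3
  simpa using h3

/-- Vega of the barrier-pricing parameter `ℬ`. -/
theorem vega_B (K B T S rd rf φ : ℝ) (hK : 0 < K) (hB : 0 < B) (hT : 0 < T)
    (hS : 0 < S) (hφ : φ = 1 ∨ φ = -1) (σ : ℝ) (hσ : 0 < σ) :
    HasDerivAt (fun v : ℝ =>
        φ * (S * Real.exp (-rf * T) *
            stdNormalCdf (φ * (Real.log (S / B) / (v * Real.sqrt T) +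
              (1 + (rd - rf - v ^ 2 / 2) / v ^ 2) * (v * Real.sqrt T))) -
          K * Real.exp (-rd * T) *
            stdNormalCdf (φ * (Real.log (S / B) / (v * Real.sqrt T) +
              (1 + (rd - rf - v ^ 2 / 2) / v ^ 2) * (v * Real.sqrt T) - v * Real.sqrt T))))
      (1 / (2 * Real.sqrt (2 * Real.pi) * σ ^ 2 * Real.sqrt T) *
        (K * (2 * Real.log (S / B) + T * (2 * rd - 2 * rf + σ ^ 2)) *
            Real.exp (-(T * (-2 * rd + 2 * rf + σ ^ 2) - 2 * Real.log (S / B)) ^ 2 /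
                (8 * σ ^ 2 * T) - rd * T) +
          S * (T * (-2 * rd + 2 * rf + σ ^ 2) - 2 * Real.log (S / B)) *
            Real.exp (-(2 * Real.log (S / B) + T * (2 * rd - 2 * rf + σ ^ 2)) ^ 2 /
                (8 * σ ^ 2 * T) - rf * T))) σ := by
  have hs : 0 < Real.sqrt T := Real.sqrt_pos.mpr hT
  set s := Real.sqrt T with hs_def
  have hs2 : s ^ 2 = T := Real.sq_sqrt hT.le
  set L := Real.log (S / B) with hL_def
  have hσ0 : σ ≠ 0 := hσ.ne'
  have hσ2 : σ ^ 2 ≠ 0 := pow_ne_zero 2 hσ0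
  have hσs : σ * s ≠ 0 := mul_ne_zero hσ0 hs.ne'
  -- derivative of v ↦ v * s
  have d_vs : HasDerivAt (fun v : ℝ => v * s) s σ := by
    simpa using (hasDerivAt_id σ).mul_const s
  have d_frac : HasDerivAt (fun v : ℝ => L / (v * s))
      ((0 * (σ * s) - L * s) / (σ * s) ^ 2) σ :=
    (hasDerivAt_const σ L).div d_vs hσs
  have d_sq : HasDerivAt (fun v : ℝ => v ^ 2) (2 * σ) σ := by
    simpa using hasDerivAt_pow 2 σ
  have d_num : HasDerivAt (fun v : ℝ => rd - rf - v ^ 2 / 2) (0 - 2 * σ / 2) σ :=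
    (hasDerivAt_const σ (rd - rf)).sub (d_sq.div_const 2)
  have d_q : HasDerivAt (fun v : ℝ => (rd - rf - v ^ 2 / 2) / v ^ 2)
      (((0 - 2 * σ / 2) * σ ^ 2 - (rd - rf - σ ^ 2 / 2) * (2 * σ)) / (σ ^ 2) ^ 2) σ :=
    d_num.div d_sq hσ2
  have d_one_q := (hasDerivAt_const σ (1:ℝ)).add d_q
  have d_prod := d_one_q.mul d_vs
  have d_x2 := d_frac.add d_prod
  have d_in1 := d_x2.const_mul φ
  have d_in2 := (d_x2.sub d_vs).const_mul φ
  have c1 := (cdf_hasDerivAt _).comp σ d_in1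
  have c2 := (cdf_hasDerivAt _).comp σ d_in2
  have cS := c1.const_mul (S * Real.exp (-rf * T))
  have cK := c2.const_mul (K * Real.exp (-rd * T))
  have final := (cS.sub cK).const_mul φ
  refine (final.congr_deriv ?_ : _)
  simp only [Pi.add_apply, Pi.mul_apply, Pi.sub_apply]
  symm
  rcases hφ with rfl | rfl
  · rw [← hs2]
    have e1 : (-(1 * (L / (σ * s) + (1 + (rd - rf - σ ^ 2 / 2) / σ ^ 2) * (σ * s))) ^ 2 / 2 : ℝ)
        = -(2 * L + s ^ 2 * (2 * rd - 2 * rf + σ ^ 2)) ^ 2 / (8 * σ ^ 2 * s ^ 2) := by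
      field_simp
      ring
    have e2 : (-(1 * (L / (σ * s) + (1 + (rd - rf - σ ^ 2 / 2) / σ ^ 2) * (σ * s) - σ * s)) ^ 2 / 2 : ℝ)
        = -(s ^ 2 * (-2 * rd + 2 * rf + σ ^ 2) - 2 * L) ^ 2 / (8 * σ ^ 2 * s ^ 2) := by
      field_simp
      ring
    rw [e1, e2, Real.exp_sub, Real.exp_sub,
      show -rf * s ^ 2 = -(rf * s ^ 2) by ring, show -rd * s ^ 2 = -(rd * s ^ 2) by ring,
      Real.exp_neg, Real.exp_neg]
    have h2pi : Real.sqrt (2 * Real.pi) ≠ 0 := by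
      have : (0:ℝ) < 2 * Real.pi := by positivity
      exact (Real.sqrt_ne_zero'.mpr this)
    field_simp
    ring
  · rw [← hs2]
    have e1 : (-(-1 * (L / (σ * s) + (1 + (rd - rf - σ ^ 2 / 2) / σ ^ 2) * (σ * s))) ^ 2 / 2 : ℝ)
        = -(2 * L + s ^ 2 * (2 * rd - 2 * rf + σ ^ 2)) ^ 2 / (8 * σ ^ 2 * s ^ 2) := by
      field_simp
      ring
    have e2 : (-(-1 * (L / (σ * s) + (1 + (rd - rf - σ ^ 2 / 2) / σ ^ 2) * (σ * s) - σ * s)) ^ 2 / 2 : ℝ)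
        = -(s ^ 2 * (-2 * rd + 2 * rf + σ ^ 2) - 2 * L) ^ 2 / (8 * σ ^ 2 * s ^ 2) := by
      field_simp
      ring
    rw [e1, e2, Real.exp_sub, Real.exp_sub,
      show -rf * s ^ 2 = -(rf * s ^ 2) by ring, show -rd * s ^ 2 = -(rd * s ^ 2) by ring,
      Real.exp_neg, Real.exp_neg]
    have h2pi : Real.sqrt (2 * Real.pi) ≠ 0 := by
      have : (0:ℝ) < 2 * Real.pi := by positivity
      exact (Real.sqrt_ne_zero'.mpr this)
    field_simp
    ring
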